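/- Suppose R_0 and R are monoidal categories, the functor c : R_0 → R is strong monoidal, and D_R is given the induced monoidal product (the product of arrows x → y and x' → y' followed by free isomorphisms w and w' is the arrow x ⊗ x' → y ⊗ y' in R_0 followed by the automorphism w ⊗ w'). Then the left Kan extension functor p_! : Set^{D_R^op} → Set^{R^op} along the monoidal projection p : D_R → R is canonically a strong monoidal functor with respect to the Day convolution monoidal structures on both presheaf categories. -/

import Mathlib

open CategoryTheory Limits Opposite MonoidalCategory

universe u

namespace PaperFormal

variable {C : Type u} [Category.{u} C]

/-- A tribe (Joyal): a category with a terminal object and a class of fibrations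
containing the isomorphisms and the maps to the terminal object, closed under
composition, with pullbacks of fibrations existing and being fibrations;
every map factors as an anodyne map (LLP against all fibrations) followed by a
fibration, and anodyne maps are stable under pullback along fibrations. -/
structure Tribe (C : Type u) [Category.{u} C] : Type u where
  fib : MorphismProperty C
  term : C
  isTerminal : IsTerminal term
  fib_of_iso : ∀ {a b : C} (f : a ⟶ b), IsIso f → fib f
  fib_comp : ∀ {a b c : C} (f : a ⟶ b) (g : b ⟶ c), fib f → fib g → fib (f ≫ g)
  fib_to_term : ∀ a : C, fib (isTerminal.from a)
  hasPullback : ∀ {a b c : C} (f : a ⟶ c) (p : b ⟶ c), fib p → HasPullback f p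
  fib_base_change :
    ∀ {P x y z : C} (fst : P ⟶ x) (snd : P ⟶ y) (f : x ⟶ z) (g : y ⟶ z),
      IsPullback fst snd f g → fib g → fib fst
  factor :
    ∀ {a b : C} (f : a ⟶ b), ∃ (e : C) (i : a ⟶ e) (q : e ⟶ b),
      i ≫ q = f ∧ fib q ∧
        (∀ {x y : C} (p : x ⟶ y), fib p → HasLiftingProperty i p)
  anodyne_base_change :
    ∀ {P x y z : C} (fst : P ⟶ x) (snd : P ⟶ y) (f : x ⟶ z) (g : y ⟶ z),
      IsPullback fst snd f g → fib g →
      (∀ {u v : C} (q : u ⟶ v), fib q → HasLiftingProperty f q) →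
      (∀ {u v : C} (q : u ⟶ v), fib q → HasLiftingProperty fst q)

/-- Anodyne maps of a tribe: the maps with the left lifting property against
all fibrations. -/
def Tribe.anodyne (T : Tribe C) : MorphismProperty C :=
  fun _ _ f => ∀ {x y : C} (p : x ⟶ y), T.fib p → HasLiftingProperty f p

/-- `σ : b ⟶ P` together with `π₁ π₂ : P ⟶ b` is a path object for `b`:
`σ` is an anodyne section of both projections and the induced map to the
product `b × b` is a fibration. -/
def Tribe.IsPathObject (T : Tribe C) {b P : C} (σ : b ⟶ P) (π₁ π₂ : P ⟶ b) : Prop :=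
  σ ≫ π₁ = 𝟙 b ∧ σ ≫ π₂ = 𝟙 b ∧ T.anodyne σ ∧
    ∃ (bb : C) (p q : bb ⟶ b),
      IsPullback p q (T.isTerminal.from b) (T.isTerminal.from b) ∧
      ∃ k : P ⟶ bb, k ≫ p = π₁ ∧ k ≫ q = π₂ ∧ T.fib k

/-- Two maps are homotopic if they factor jointly through a path object. -/
def Tribe.Homotopic (T : Tribe C) {a b : C} (f g : a ⟶ b) : Prop :=
  ∃ (P : C) (σ : b ⟶ P) (π₁ π₂ : P ⟶ b), T.IsPathObject σ π₁ π₂ ∧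
    ∃ H : a ⟶ P, H ≫ π₁ = f ∧ H ≫ π₂ = g

/-- Weak equivalences of a tribe are its homotopy equivalences. -/
def Tribe.weq (T : Tribe C) : MorphismProperty C :=
  fun a b f => ∃ g : b ⟶ a, T.Homotopic (f ≫ g) (𝟙 a) ∧ T.Homotopic (g ≫ f) (𝟙 b)

/-- Trivial fibrations: fibrations that are weak equivalences. -/
def Tribe.trivFib (T : Tribe C) : MorphismProperty C :=
  fun _ _ f => T.fib f ∧ T.weq f



/-- A (strict) direct category structure: a degree function such that morphisms
do not lower degree and any morphism between objects of equal degree is an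
identity. -/
def IsDirect {J : Type u} [Category.{u} J] (deg : J → ℕ) : Prop :=
  (∀ {i j : J} (_ : i ⟶ j), deg i ≤ deg j) ∧
    (∀ {i j : J} (f : i ⟶ j) (h : deg i = deg j), ∃ h' : i = j, f = eqToHom h')

/-- A generalized direct category structure (as for EZ-categories): morphisms do
not lower degree and morphisms between objects of equal degree are isomorphisms. -/
def IsGenDirect {J : Type u} [Category.{u} J] (deg : J → ℕ) : Prop :=
  (∀ {i j : J} (_ : i ⟶ j), deg i ≤ deg j) ∧
    (∀ {i j : J} (f : i ⟶ j), deg i = deg j → IsIso f)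

section Reedy

variable {J : Type u} [Category.{u} J]

/-- The index category for the matching object of a `J`-indexed diagram
(`J`-presheaf) at `x`: non-identity morphisms of `J` with target `x`. -/
structure MatchIdx (J : Type u) [Category.{u} J] (x : J) : Type u where
  src : J
  hom : src ⟶ x
  nonid : ∀ h : src = x, hom ≠ eqToHom h

instance (x : J) : Category.{u} (MatchIdx J x) where
  Hom a b := { u : b.src ⟶ a.src // u ≫ a.hom = b.hom }
  id a := ⟨𝟙 a.src, by simp⟩
  comp {a b c} u v := ⟨v.val ≫ u.val, by rw [Category.assoc, u.property, v.property]⟩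
  id_comp := by intros; apply Subtype.ext; simp
  comp_id := by intros; apply Subtype.ext; simp
  assoc := by intros; apply Subtype.ext; simp

/-- The diagram whose limit is the matching object at `x` of a diagram
`F : Jᵒᵖ ⥤ C`. -/
@[simps]
def matchingDiagram (F : Jᵒᵖ ⥤ C) (x : J) : MatchIdx J x ⥤ C where
  obj a := F.obj (op a.src)
  map {a b} u := F.map u.val.op
  map_id := by
    intro a
    show F.map (𝟙 a.src).op = _
    simp
  map_comp := by
    intro a b c u v
    show F.map (v.val ≫ u.val).op = _
    rw [op_comp, F.map_comp]

/-- The canonical cone on the matching diagram with vertex `F x`. -/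
@[simps]
def matchingCone (F : Jᵒᵖ ⥤ C) (x : J) : Cone (matchingDiagram F x) where
  pt := F.obj (op x)
  π := { app := fun a => F.map a.hom.op
         naturality := by
           intro a b u
           dsimp [matchingDiagram]
           rw [Category.id_comp, ← F.map_comp, ← op_comp, u.property] }

/-- Given `p : F ⟶ F'`, transport a cone on the matching diagram of `F`
to a cone on the matching diagram of `F'`. -/
@[simps]
def matchingConeMap {F F' : Jᵒᵖ ⥤ C} (p : F ⟶ F') (x : J)
    (c : Cone (matchingDiagram F x)) : Cone (matchingDiagram F' x) where
  pt := c.pt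
  π := { app := fun a => c.π.app a ≫ p.app (op a.src)
         naturality := by
           intro a b u
           dsimp [matchingDiagram]
           rw [Category.id_comp, Category.assoc, ← p.naturality]
           have := c.π.naturality u
           dsimp [matchingDiagram] at this
           rw [Category.id_comp] at this
           rw [← Category.assoc, ← this] }

/-- `p : F ⟶ F'` is a Reedy map with relative matching maps in the class `P`:
for every `x` the matching objects of `F` and `F'` at `x` exist, the pullback
`F' x ×_{M_x F'} M_x F` exists, and the induced gap map belongs to `P`.
Taking `P` to be the fibrations (resp. trivial fibrations) of a tribe yields
Reedy fibrations (resp. Reedy trivial fibrations). -/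
def ReedyMapWrt (P : MorphismProperty C) {F F' : Jᵒᵖ ⥤ C} (p : F ⟶ F') : Prop :=
  ∀ x : J,
    ∃ (MF : LimitCone (matchingDiagram F x)) (MF' : LimitCone (matchingDiagram F' x))
      (Q : C) (q₁ : Q ⟶ F'.obj (op x)) (q₂ : Q ⟶ MF.cone.pt),
      IsPullback q₁ q₂ (MF'.isLimit.lift (matchingCone F' x))
          (MF'.isLimit.lift (matchingConeMap p x MF.cone)) ∧
      ∀ gap : F.obj (op x) ⟶ Q,
        gap ≫ q₁ = p.app (op x) →
        gap ≫ q₂ = MF.isLimit.lift (matchingCone F x) → P gap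

/-- Reedy fibrations between diagrams `Jᵒᵖ ⥤ C` relative to a tribe structure. -/
def ReedyFib (T : Tribe C) {F F' : Jᵒᵖ ⥤ C} (p : F ⟶ F') : Prop :=
  ReedyMapWrt T.fib p

/-- Reedy trivial fibrations between diagrams `Jᵒᵖ ⥤ C`. -/
def ReedyTrivFib (T : Tribe C) {F F' : Jᵒᵖ ⥤ C} (p : F ⟶ F') : Prop :=
  ReedyMapWrt T.trivFib p

/-- A diagram is Reedy fibrant if for every `x` the matching object at `x`
exists and the canonical map into it is a fibration. -/
def ReedyFibrant (T : Tribe C) (F : Jᵒᵖ ⥤ C) : Prop :=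
  ∀ x : J, ∃ MF : LimitCone (matchingDiagram F x),
    T.fib (MF.isLimit.lift (matchingCone F x))

/-- A diagram is homotopical (homotopically constant) if it sends every
morphism to a weak equivalence. -/
def Homotopical (T : Tribe C) (F : Jᵒᵖ ⥤ C) : Prop :=
  ∀ {i j : Jᵒᵖ} (f : i ⟶ j), T.weq (F.map f)

/-- A `J`-frame in a tribe: a Reedy fibrant homotopical diagram `Jᵒᵖ ⥤ C`. -/
def IsJFrame (T : Tribe C) (F : Jᵒᵖ ⥤ C) : Prop :=
  Homotopical T F ∧ ReedyFibrant T F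

/-- Anodyne maps of diagrams relative to the Reedy tribe structure:
maps with the left lifting property against all Reedy fibrations between
Reedy fibrant diagrams. -/
def ReedyAnodyne (T : Tribe C) {F F' : Jᵒᵖ ⥤ C} (i : F ⟶ F') : Prop :=
  ∀ {G G' : Jᵒᵖ ⥤ C} (q : G ⟶ G'), ReedyFibrant T G → ReedyFibrant T G' →
    ReedyFib T q → HasLiftingProperty i q

end Reedy




variable {J : Type u} [Category.{u} J]

/-- A presheaf is finite if it has finitely many cells. -/
def FinPsh (K : Jᵒᵖ ⥤ Type u) : Prop :=
  Finite (Σ j : Jᵒᵖ, K.obj j)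

/-- Data exhibiting `pt` as a cotensor `F^K` of the diagram `F : Jᵒᵖ ⥤ C`
by the presheaf `K`: a representation, natural in `z`, of the functor
`z ↦ Hom(K, Hom_C(z, F -))`. -/
structure CotensorData (F : Jᵒᵖ ⥤ C) (K : Jᵒᵖ ⥤ Type u) : Type u where
  pt : C
  equiv : ∀ z : C, (z ⟶ pt) ≃ (K ⟶ F ⋙ coyoneda.obj (op z))
  natural : ∀ {z z' : C} (g : z' ⟶ z) (v : z ⟶ pt),
    equiv z' (g ≫ v) = equiv z v ≫ Functor.whiskerLeft F (coyoneda.map g.op)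

/-- The map `F^K ⟶ F'^K` induced by a morphism of diagrams `p : F ⟶ F'`. -/
def IsInducedMap {F F' : Jᵒᵖ ⥤ C} (p : F ⟶ F') {K : Jᵒᵖ ⥤ Type u}
    (dF : CotensorData F K) (dF' : CotensorData F' K) (m : dF.pt ⟶ dF'.pt) : Prop :=
  dF'.equiv dF.pt m =
    dF.equiv dF.pt (𝟙 dF.pt) ≫ Functor.whiskerRight p (coyoneda.obj (op dF.pt))

/-- The map `F^L ⟶ F^K` induced by a morphism of presheaves `i : K ⟶ L`. -/
def IsRestrictionMap {F : Jᵒᵖ ⥤ C} {K L : Jᵒᵖ ⥤ Type u} (i : K ⟶ L)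
    (dL : CotensorData F L) (dK : CotensorData F K) (m : dL.pt ⟶ dK.pt) : Prop :=
  dK.equiv dL.pt m = i ≫ dL.equiv dL.pt (𝟙 dL.pt)

section Day

variable [MonoidalCategory J]

/-- Indexing data for the coend defining the Day convolution
`(K ⊗ L)(x) = ∫^{i,j} K i × L j × Hom(x, i ⊗ j)`. -/
structure DayIdx (K L : Jᵒᵖ ⥤ Type u) (x : J) : Type u where
  i : J
  j : J
  k : K.obj (op i)
  l : L.obj (op j)
  f : x ⟶ MonoidalCategory.tensorObj i j

/-- The wedge relation for the Day convolution coend. -/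
def dayRel (K L : Jᵒᵖ ⥤ Type u) (x : J) : DayIdx K L x → DayIdx K L x → Prop :=
  fun a b =>
    ∃ (u : a.i ⟶ b.i) (v : a.j ⟶ b.j),
      a.k = K.map u.op b.k ∧ a.l = L.map v.op b.l ∧
        b.f = a.f ≫ MonoidalCategory.tensorHom u v

/-- The Day convolution (geometric product) of two presheaves on a monoidal
category, defined by the coend formula
`(K ⊗ L)(x) = ∫^{i,j} K i × L j × Hom(x, i ⊗ j)`. -/
def DayProd (K L : Jᵒᵖ ⥤ Type u) : Jᵒᵖ ⥤ Type u where
  obj x := Quot (dayRel K L x.unop)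
  map {x y} g :=
    TypeCat.ofHom (Quot.map (fun a => { a with f := g.unop ≫ a.f })
      (by
        rintro a b ⟨u, v, hk, hl, hf⟩
        try dsimp only
        exact ⟨u, v, hk, hl, by rw [hf, Category.assoc]⟩))
  map_id x := by
    ext a'
    revert a'
    apply Quot.ind
    intro a
    show Quot.mk _ _ = Quot.mk _ _
    have : (𝟙 x).unop ≫ a.f = a.f := Category.id_comp a.f
    exact congrArg (fun t => Quot.mk (dayRel K L x.unop) { a with f := t }) this
  map_comp {x y z} g h := by
    ext a'
    revert a'
    apply Quot.ind
    intro a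
    show Quot.mk _ _ = Quot.mk _ _
    have : (g ≫ h).unop ≫ a.f = h.unop ≫ (g.unop ≫ a.f) := by simp
    exact congrArg (fun t => Quot.mk (dayRel K L z.unop) { a with f := t }) this

/-- Functoriality of the Day convolution in both arguments. -/
def dayMap {K K' L L' : Jᵒᵖ ⥤ Type u} (φ : K ⟶ K') (ψ : L ⟶ L') :
    DayProd K L ⟶ DayProd K' L' where
  app x := TypeCat.ofHom (Quot.map
      (fun a => { a with k := φ.app (op a.i) a.k, l := ψ.app (op a.j) a.l })
      (by
        rintro a b ⟨u, v, hk, hl, hf⟩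
        dsimp only
        refine ⟨u, v, ?_, ?_, hf⟩
        · rw [hk]
          exact (ConcreteCategory.congr_hom (φ.naturality u.op) b.k)
        · rw [hl]
          exact (ConcreteCategory.congr_hom (ψ.naturality v.op) b.l)))
  naturality {x y} g := by
    ext a'
    revert a'
    apply Quot.ind
    intro a
    rfl

end Day

/-- A category has contractible nerve; we use the standard sufficient
formulation by a zig-zag of natural transformations connecting the identity
functor to a constant functor. -/
def HasContractibleNerve (J : Type u) [Category.{u} J] : Prop :=
  ∃ j : J, Zigzag (J := J ⥤ J) (𝟭 J) ((Functor.const J).obj j)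

/-- `h : e ⟶ c` is an internal product (pushforward) `Π_g f` of `f : a ⟶ b`
along `g : b ⟶ c`, relative to a class of fibrations. -/
def IsInternalProductWrt (fib : MorphismProperty C) {a b c : C}
    (f : a ⟶ b) (g : b ⟶ c) {e : C} (h : e ⟶ c) : Prop :=
  fib h ∧
    ∃ (Q : C) (π₁ : Q ⟶ e) (π₂ : Q ⟶ b) (_ : IsPullback π₁ π₂ h g) (ε : Q ⟶ a),
      ε ≫ f = π₂ ∧
      ∀ {x : C} (k : x ⟶ c) {P : C} (ρ₁ : P ⟶ x) (ρ₂ : P ⟶ b)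
        (_ : IsPullback ρ₁ ρ₂ k g) (m : P ⟶ a), m ≫ f = ρ₂ →
        ∃! w : x ⟶ e, w ≫ h = k ∧
          ∀ v : P ⟶ Q, v ≫ π₁ = ρ₁ ≫ w → v ≫ π₂ = ρ₂ → v ≫ ε = m

/-- A π-tribe: every fibration admits an internal product along any fibration. -/
def Tribe.IsPiTribe (T : Tribe C) : Prop :=
  ∀ {a b c : C} (f : a ⟶ b) (g : b ⟶ c), T.fib f → T.fib g →
    ∃ (e : C) (h : e ⟶ c), IsInternalProductWrt T.fib f g h

/-- A morphism of tribes: a functor preserving the terminal object, fibrations,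
anodyne maps, and pullbacks of fibrations. -/
def IsTribeMorphism {C₁ C₂ : Type u} [Category.{u} C₁] [Category.{u} C₂]
    (T₁ : Tribe C₁) (T₂ : Tribe C₂) (G : C₁ ⥤ C₂) : Prop :=
  Nonempty (IsTerminal (G.obj T₁.term)) ∧
  (∀ {a b : C₁} (f : a ⟶ b), T₁.fib f → T₂.fib (G.map f)) ∧
  (∀ {a b : C₁} (f : a ⟶ b), T₁.anodyne f → T₂.anodyne (G.map f)) ∧
  (∀ {P x y z : C₁} (fst : P ⟶ x) (snd : P ⟶ y) (f : x ⟶ z) (g : y ⟶ z),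
      IsPullback fst snd f g → T₁.fib g →
      IsPullback (G.map fst) (G.map snd) (G.map f) (G.map g))

/-- Cisinski's approximation properties (AP1) and (AP2), characterizing
DK-equivalences (functors inducing an equivalence of hammock localizations)
between fibration categories. -/
def IsDKEquivalence {C₁ C₂ : Type u} [Category.{u} C₁] [Category.{u} C₂]
    (weq₁ : MorphismProperty C₁) (weq₂ : MorphismProperty C₂) (G : C₁ ⥤ C₂) : Prop :=
  (∀ {a b : C₁} (f : a ⟶ b), weq₁ f ↔ weq₂ (G.map f)) ∧
  (∀ (y : C₂) (d : C₁) (f : y ⟶ G.obj d),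
    ∃ (d' : C₁) (g : d' ⟶ d) (v : y ⟶ G.obj d'),
      weq₂ v ∧ v ≫ G.map g = f)


section JTribe

variable (J : Type u) [Category.{u} J] (C : Type u) [Category.{u} C]

/-- A system of cotensors by presheaves on `J` for objects of `C`,
functorial contravariantly in the presheaf and covariantly in the object. -/
structure Cotensors : Type (u + 1) where
  cot : C → (Jᵒᵖ ⥤ Type u) → C
  cotMap : ∀ (a : C) {K L : Jᵒᵖ ⥤ Type u}, (K ⟶ L) → (cot a L ⟶ cot a K)
  cotObj : ∀ {a b : C}, (a ⟶ b) → ∀ K : Jᵒᵖ ⥤ Type u, (cot a K ⟶ cot b K)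
  cotMap_id : ∀ (a : C) (K : Jᵒᵖ ⥤ Type u), cotMap a (𝟙 K) = 𝟙 (cot a K)
  cotMap_comp : ∀ (a : C) {K L M : Jᵒᵖ ⥤ Type u} (f : K ⟶ L) (g : L ⟶ M),
    cotMap a (f ≫ g) = cotMap a g ≫ cotMap a f
  cotObj_id : ∀ (a : C) (K : Jᵒᵖ ⥤ Type u), cotObj (𝟙 a) K = 𝟙 (cot a K)
  cotObj_comp : ∀ {a b c : C} (f : a ⟶ b) (g : b ⟶ c) (K : Jᵒᵖ ⥤ Type u),
    cotObj (f ≫ g) K = cotObj f K ≫ cotObj g K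
  cot_comm : ∀ {a b : C} (p : a ⟶ b) {K L : Jᵒᵖ ⥤ Type u} (i : K ⟶ L),
    cotObj p L ≫ cotMap b i = cotMap a i ≫ cotObj p K

variable {J C}

/-- Natural families `K ⟶ Hom(z, a^{J^-})`, i.e. presheaf morphisms from `K`
to the enriched hom induced by a cotensor system (whose value at `j` is
`Hom_C(z, a^{J^j})`). -/
def Cotensors.EHomNat (S : Cotensors J C) (z a : C) (K : Jᵒᵖ ⥤ Type u) : Type u :=
  { φ : ∀ j : Jᵒᵖ, K.obj j → (z ⟶ S.cot a (yoneda.obj j.unop)) //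
    ∀ {j j' : Jᵒᵖ} (u : j ⟶ j') (k : K.obj j),
      φ j' (K.map u k) = φ j k ≫ S.cotMap a (yoneda.map u.unop) }

/-- A `J`-tribe structure on a tribe `T`: an enrichment over presheaves on `J`
(presented by its system of cotensors, the enriched hom being
`Hom(z,a)_j = Hom_C(z, a^{J^j})`) with cotensors by finite presheaves, such
that (1) cotensoring a fibration by a monomorphism of finite presheaves gives a
fibration as gap map, trivially so if the fibration is trivial; (2) cotensors
by representable morphisms are weak equivalences; and (3) cotensoring by a
finite presheaf preserves anodyne maps. -/
structure JTribeOn {C : Type u} [Category.{u} C] (J : Type u) [Category.{u} J]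
    (T : Tribe C) extends Cotensors J C : Type (u + 1) where
  univ : ∀ (a : C) (K : Jᵒᵖ ⥤ Type u), FinPsh K →
    ∃ e : ∀ z : C, (z ⟶ toCotensors.cot a K) ≃ toCotensors.EHomNat z a K,
      -- the representation is natural in `z`
      ∀ {z z' : C} (g : z' ⟶ z) (v : z ⟶ toCotensors.cot a K) (j : Jᵒᵖ) (k : K.obj j),
        ((e z') (g ≫ v)).val j k = g ≫ ((e z) v).val j k
  gap_fib : ∀ {K L : Jᵒᵖ ⥤ Type u} (i : K ⟶ L), Mono i → FinPsh K → FinPsh L →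
    ∀ {a b : C} (p : a ⟶ b), T.fib p →
    ∀ (P : C) (pr₁ : P ⟶ toCotensors.cot b L) (pr₂ : P ⟶ toCotensors.cot a K),
      IsPullback pr₁ pr₂ (toCotensors.cotMap b i) (toCotensors.cotObj p K) →
      ∀ gap : toCotensors.cot a L ⟶ P,
        gap ≫ pr₁ = toCotensors.cotObj p L → gap ≫ pr₂ = toCotensors.cotMap a i →
        T.fib gap ∧ (T.weq p → T.trivFib gap)
  rep_weq : ∀ {i j : J} (f : i ⟶ j) (a : C),
    T.weq (toCotensors.cotMap a (yoneda.map f))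
  anodyne_cot : ∀ (K : Jᵒᵖ ⥤ Type u), FinPsh K → ∀ {a b : C} (p : a ⟶ b),
    T.anodyne p → T.anodyne (toCotensors.cotObj p K)

end JTribe

section Frames

variable {C : Type u} [Category.{u} C]

/-- The category of `J`-frames in a tribe. -/
def JFrameCat (T : Tribe C) (J : Type u) [Category.{u} J] : Type u :=
  ObjectProperty.FullSubcategory (fun F : Jᵒᵖ ⥤ C => IsJFrame T F)

instance (T : Tribe C) (J : Type u) [Category.{u} J] : Category.{u} (JFrameCat T J) :=
  ObjectProperty.FullSubcategory.category _

variable {D R : Type u} [Category.{u} D] [Category.{u} R]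

/-- An `R`-frame relative to a projection `p : D ⥤ R`: a homotopical diagram
`F : Rᵒᵖ ⥤ C` such that `p^*F` is Reedy fibrant. -/
def IsRelFrame (T : Tribe C) (p : D ⥤ R) (F : Rᵒᵖ ⥤ C) : Prop :=
  Homotopical T F ∧ ReedyFibrant T (p.op ⋙ F)

/-- The category of `R`-frames relative to `p : D ⥤ R`. -/
def RelFrameCat (T : Tribe C) (p : D ⥤ R) : Type u :=
  ObjectProperty.FullSubcategory (fun F : Rᵒᵖ ⥤ C => IsRelFrame T p F)

instance (T : Tribe C) (p : D ⥤ R) : Category.{u} (RelFrameCat T p) :=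
  ObjectProperty.FullSubcategory.category _

/-- `p`-fibrations: maps whose image under `p^*` is a Reedy fibration. -/
def pFib (T : Tribe C) (p : D ⥤ R) {F F' : Rᵒᵖ ⥤ C} (φ : F ⟶ F') : Prop :=
  ReedyFib T (Functor.whiskerLeft p.op φ)

/-- Trivial `p`-fibrations: maps whose image under `p^*` is a Reedy trivial
fibration. -/
def pTrivFib (T : Tribe C) (p : D ⥤ R) {F F' : Rᵒᵖ ⥤ C} (φ : F ⟶ F') : Prop :=
  ReedyTrivFib T (Functor.whiskerLeft p.op φ)

/-- Anodyne maps relative to the tribe structure on `R`-frames: maps with the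
left lifting property against all `p`-fibrations between `R`-frames. -/
def pAnodyne (T : Tribe C) (p : D ⥤ R) {F F' : Rᵒᵖ ⥤ C} (i : F ⟶ F') : Prop :=
  ∀ {G G' : Rᵒᵖ ⥤ C} (q : G ⟶ G'), IsRelFrame T p G → IsRelFrame T p G' →
    pFib T p q → HasLiftingProperty i q

/-- The restriction functor `p^*` on presheaves of sets. -/
def restrictionPsh (p : D ⥤ R) : (Rᵒᵖ ⥤ Type u) ⥤ (Dᵒᵖ ⥤ Type u) :=
  (Functor.whiskeringLeft Dᵒᵖ Rᵒᵖ (Type u)).obj p.op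

/-- A functor is absolutely dense if the restriction along it is fully
faithful on presheaves. -/
def AbsolutelyDense (p : D ⥤ R) : Prop :=
  (restrictionPsh p).Full ∧ (restrictionPsh p).Faithful

end Frames

section DConstruction

/-- The twisted arrow category of `E`: objects are arrows of `E`, morphisms
from `f : a ⟶ b` to `g : a' ⟶ b'` are pairs `(u : a' ⟶ a, v : b ⟶ b')` with
`u ≫ f ≫ v = g`. -/
structure Tw (E : Type u) [Category.{u} E] : Type u where
  left : E
  right : E
  hom : left ⟶ right

instance (E : Type u) [Category.{u} E] : Category.{u} (Tw E) where
  Hom t s := { uv : (s.left ⟶ t.left) × (t.right ⟶ s.right) // uv.1 ≫ t.hom ≫ uv.2 = s.hom }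
  id t := ⟨(𝟙 _, 𝟙 _), by simp⟩
  comp {t s r} f g := ⟨(g.val.1 ≫ f.val.1, f.val.2 ≫ g.val.2), by
    have h : g.val.1 ≫ (f.val.1 ≫ t.hom ≫ f.val.2) ≫ g.val.2 = r.hom := by
      rw [f.property]; exact g.property
    simpa only [Category.assoc] using h⟩
  id_comp := by intros; apply Subtype.ext; dsimp; ext <;> simp
  comp_id := by intros; apply Subtype.ext; dsimp; ext <;> simp
  assoc := by intros; apply Subtype.ext; dsimp; ext <;> simp

/-- The codomain projection of the twisted arrow category. -/
@[simps]
def twRight (E : Type u) [Category.{u} E] : Tw E ⥤ E where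
  obj t := t.right
  map f := f.val.2
  map_id := by intros; rfl
  map_comp := by intros; rfl

variable {R₀ R : Type u} [Category.{u} R₀] [Category.{u} R]

/-- The relations presenting the pushout `F_≃(R)` of the counit
`F(R₀) → R₀` along `F(c) : F(R₀) → F(R)`, where `F` is the free category
comonad: two paths of arrows of `R` coming from paths in `R₀` with equal
composites are identified. -/
inductive PushRel (c : R₀ ⥤ R) : HomRel (Paths R)
  | mk {x y : R₀} (σ τ : Quiver.Path x y) (h : composePath σ = composePath τ) :
      PushRel c (c.toPrefunctor.mapPath σ) (c.toPrefunctor.mapPath τ)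

/-- The pushout `F_≃(R)` of the counit `F(R₀) → R₀` along `F(c)`. -/
def FIso (c : R₀ ⥤ R) : Type u := CategoryTheory.Quotient (PushRel c)

instance (c : R₀ ⥤ R) : Category.{u} (FIso c) :=
  inferInstanceAs (Category (CategoryTheory.Quotient (PushRel c)))

/-- The quotient functor `F(R) = Paths R ⥤ F_≃(R)`. -/
def qFunctor (c : R₀ ⥤ R) : Paths R ⥤ FIso c :=
  CategoryTheory.Quotient.functor (PushRel c)

/-- The canonical functor `F(R) = Paths R ⥤ R` composing a path. -/
def pathsCompose (R : Type u) [Category.{u} R] : Paths R ⥤ R :=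
  Paths.lift (Functor.id R).toPrefunctor

theorem pathsCompose_mapPath (c : R₀ ⥤ R) {x y : R₀} (σ : Quiver.Path x y) :
    (pathsCompose R).map (c.toPrefunctor.mapPath σ) = c.map (composePath σ) := by
  induction σ with
  | nil =>
      show (Paths.lift (Functor.id R).toPrefunctor).map Quiver.Path.nil = c.map (𝟙 x)
      rw [Paths.lift_nil, c.map_id]
      rfl
  | cons p e ih =>
      show (Paths.lift (Functor.id R).toPrefunctor).map
          ((c.toPrefunctor.mapPath p).cons (c.map e)) = c.map (composePath p ≫ e)
      show (pathsCompose R).map (c.toPrefunctor.mapPath p) ≫ (Functor.id R).map (c.map e) =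
        c.map (composePath p ≫ e)
      rw [ih, c.map_comp]
      rfl

/-- The projection `p₀ : F_≃(R) ⥤ R` induced by the pushout property. -/
def fisoToBase (c : R₀ ⥤ R) : FIso c ⥤ R :=
  CategoryTheory.Quotient.lift (PushRel c) (pathsCompose R)
    (by
      rintro X Y f g ⟨σ, τ, h⟩
      rw [pathsCompose_mapPath, pathsCompose_mapPath, h])

/-- The underlying object of `R` of an object of `F_≃(R)`. -/
def asR {c : R₀ ⥤ R} (X : FIso c) : R := X.as

/-- A morphism of `F_≃(R)` comes from a map in `R₀`. -/
def FromBase (c : R₀ ⥤ R) {X Y : FIso c} (f : X ⟶ Y) : Prop :=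
  ∃ (x y : R₀) (k : x ⟶ y) (hX : X = (qFunctor c).obj (c.obj x))
    (hY : Y = (qFunctor c).obj (c.obj y)),
    f = eqToHom hX ≫ (qFunctor c).map ((Paths.of R).map (c.map k)) ≫ eqToHom hY.symm

/-- A morphism of `F_≃(R)` is a "free" isomorphism of `R` (the image of a path
of length one whose underlying arrow is an isomorphism) or an identity. -/
def FreeIsoOrId (c : R₀ ⥤ R) {X Y : FIso c} (f : X ⟶ Y) : Prop :=
  (∃ h : X = Y, f = eqToHom h) ∨
    ∃ (w : asR X ⟶ asR Y), IsIso w ∧ f = (qFunctor c).map ((Paths.of R).map w)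

/-- The direct category `D_R`: the full subcategory of the twisted arrow
category of `F_≃(R)` spanned by the arrows of the form `x → z → y` with
`x → z` coming from a map in `R₀` and `z → y` a free isomorphism of `R` or an
identity. -/
def DCat (c : R₀ ⥤ R) : Type u :=
  ObjectProperty.FullSubcategory (fun t : Tw (FIso c) =>
    ∃ (Z : FIso c) (g : t.left ⟶ Z) (h : Z ⟶ t.right),
      FromBase c g ∧ FreeIsoOrId c h ∧ g ≫ h = t.hom)

instance (c : R₀ ⥤ R) : Category.{u} (DCat c) := ObjectProperty.FullSubcategory.category _

/-- The canonical projection `p : D_R ⥤ R` (on objects, an object `x → y` of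
`D_R` is sent to the codomain `y`). -/
def projD (c : R₀ ⥤ R) : DCat c ⥤ R :=
  ObjectProperty.ι _ ⋙ twRight (FIso c) ⋙ fisoToBase c

/-- The full subcategory `(D_R)_{≤ n}` of `D_R` spanned by the objects whose
codomain has degree at most `n`. -/
def DCatLE (c : R₀ ⥤ R) (degR : R → ℕ) (n : ℕ) : Type u :=
  ObjectProperty.FullSubcategory (fun d : DCat c => degR ((projD c).obj d) ≤ n)

instance (c : R₀ ⥤ R) (degR : R → ℕ) (n : ℕ) : Category.{u} (DCatLE c degR n) :=
  ObjectProperty.FullSubcategory.category _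

end DConstruction

section Cubes

/-- The symmetric semi-cube category with reversals `□^s_♯`: the free symmetric
monoidal category on two maps `δ₀ δ₁ : I⁰ ⟶ I¹` and an involution `r : I¹ ⟶ I¹`.
Concretely, objects are the tensor powers `Iⁿ` (encoded by natural numbers). -/
def SemiCube : Type := ℕ

/-- A morphism `Iⁿ ⟶ Iᵐ` of `□^s_♯`: each output coordinate is either a
constant `0`/`1` (a face) or an input coordinate, possibly reversed; every
input coordinate is used exactly once. -/
@[ext]
structure CubeHom (n m : ℕ) : Type where
  out : Fin m → (Fin n × Bool) ⊕ Bool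
  uniq : ∀ i : Fin n, ∃! j : Fin m, ∃ b : Bool, out j = Sum.inl (i, b)

/-- The identity cube morphism. -/
def CubeHom.id (n : ℕ) : CubeHom n n where
  out j := Sum.inl (j, false)
  uniq i := ⟨i, ⟨false, rfl⟩, by rintro j ⟨b, hb⟩; simpa using (Prod.ext_iff.mp (Sum.inl.inj hb)).1⟩

/-- The underlying output function of the composite of cube morphisms. -/
def CubeHom.compOut {n m k : ℕ} (f : CubeHom n m) (g : CubeHom m k) :
    Fin k → (Fin n × Bool) ⊕ Bool := fun j =>
  match g.out j with
  | .inr b => .inr b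
  | .inl (i', b') =>
      match f.out i' with
      | .inr b => .inr (xor b' b)
      | .inl (i, b) => .inl (i, xor b b')

theorem CubeHom.compOut_inl {n m k : ℕ} (f : CubeHom n m) (g : CubeHom m k)
    {j : Fin k} {i' : Fin m} {b' : Bool} (hg : g.out j = .inl (i', b')) :
    (∀ {i b}, f.out i' = .inl (i, b) → f.compOut g j = .inl (i, xor b b')) ∧
    (∀ {b}, f.out i' = .inr b → f.compOut g j = .inr (xor b' b)) := by
  constructor
  · intro i b hf
    simp only [compOut, hg, hf]
  · intro b hf
    simp only [compOut, hg, hf]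

theorem CubeHom.compOut_inr {n m k : ℕ} (f : CubeHom n m) (g : CubeHom m k)
    {j : Fin k} {b : Bool} (hg : g.out j = .inr b) :
    f.compOut g j = .inr b := by
  simp only [compOut, hg]

/-- Composition of cube morphisms. -/
def CubeHom.comp {n m k : ℕ} (f : CubeHom n m) (g : CubeHom m k) : CubeHom n k where
  out := f.compOut g
  uniq i := by
    obtain ⟨i', hi', hi'u⟩ := f.uniq i
    obtain ⟨b₁, hb₁⟩ := hi'
    obtain ⟨j, hj, hju⟩ := g.uniq i'
    obtain ⟨b₂, hb₂⟩ := hj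
    refine ⟨j, ⟨xor b₁ b₂, (f.compOut_inl g hb₂).1 hb₁⟩, ?_⟩
    rintro j₀ ⟨b₀, hb₀⟩
    rcases hg : g.out j₀ with ⟨i₀', b₀'⟩ | b
    · rcases hf : f.out i₀' with ⟨i₀, bb⟩ | cst
      · rw [(f.compOut_inl g hg).1 hf] at hb₀
        have h1 : i₀ = i := by simpa using (Prod.ext_iff.mp (Sum.inl.inj hb₀)).1
        subst h1
        have h2 : i₀' = i' := hi'u i₀' ⟨bb, hf⟩
        subst h2
        exact hju j₀ ⟨b₀', hg⟩
      · rw [(f.compOut_inl g hg).2 hf] at hb₀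
        simp at hb₀
    · rw [f.compOut_inr g hg] at hb₀
      simp at hb₀

instance : Category.{0} SemiCube where
  Hom n m := CubeHom n m
  id n := CubeHom.id n
  comp f g := f.comp g
  id_comp f := by
    apply CubeHom.ext
    funext j
    show (CubeHom.id _).compOut f j = f.out j
    rcases hf : f.out j with ⟨i', b'⟩ | b
    · rw [((CubeHom.id _).compOut_inl f hf).1 rfl]
      simp
    · rw [(CubeHom.id _).compOut_inr f hf]
  comp_id f := by
    apply CubeHom.ext
    funext j
    show f.compOut (CubeHom.id _) j = f.out j
    rcases hf : f.out j with ⟨i', b'⟩ | b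
    · rw [(f.compOut_inl (CubeHom.id _) rfl).1 hf]
      simp
    · rw [(f.compOut_inl (CubeHom.id _) rfl).2 hf]
      simp
  assoc f g h := by
    apply CubeHom.ext
    funext j
    show (f.comp g).compOut h j = f.compOut (g.comp h) j
    rcases hh : h.out j with ⟨j'', b''⟩ | b
    · rcases hg : g.out j'' with ⟨i', b'⟩ | cst
      · rcases hf : f.out i' with ⟨i, b⟩ | cst'
        · rw [((f.comp g).compOut_inl h hh).1 ((f.compOut_inl g hg).1 hf),
            (f.compOut_inl (g.comp h) ((g.compOut_inl h hh).1 hg)).1 hf]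
          congr 1
          cases b <;> cases b' <;> cases b'' <;> rfl
        · rw [((f.comp g).compOut_inl h hh).2 ((f.compOut_inl g hg).2 hf),
            (f.compOut_inl (g.comp h) ((g.compOut_inl h hh).1 hg)).2 hf]
          congr 1
          cases cst' <;> cases b' <;> cases b'' <;> rfl
      · rw [((f.comp g).compOut_inl h hh).2 ((f.compOut_inr g hg)),
          f.compOut_inr (g.comp h) ((g.compOut_inl h hh).2 hg)]
    · rw [(f.comp g).compOut_inr h hh, f.compOut_inr (g.comp h) (g.compOut_inr h hh)]

/-- The face maps `δ_b : I⁰ ⟶ I¹`. -/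
def cubeFace (b : Bool) : CubeHom 0 1 where
  out _ := Sum.inr b
  uniq i := i.elim0

/-- The reversal `r : I¹ ⟶ I¹`. -/
def cubeReversal : CubeHom 1 1 where
  out j := Sum.inl (j, true)
  uniq i := ⟨i, ⟨true, rfl⟩, by rintro j ⟨b, hb⟩; simpa using (Prod.ext_iff.mp (Sum.inl.inj hb)).1⟩

/-- A cube morphism is a tensor product of copies of identities and of the
face maps `δ₀`, `δ₁`: no reversals occur and the input coordinates appear in
order. -/
def IsFaceTensor {n m : ℕ} (f : CubeHom n m) : Prop :=
  (∀ (j : Fin m) (i : Fin n) (b : Bool), f.out j = Sum.inl (i, b) → b = false) ∧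
  (∀ (j j' : Fin m) (i i' : Fin n) (b b' : Bool),
    f.out j = Sum.inl (i, b) → f.out j' = Sum.inl (i', b') → (j < j' ↔ i < i'))

/-- The augmented semi-simplex category `Δ_{a,♯}`: finite ordinals (including
the empty one) and injective monotone maps; the object `k` represents the
ordinal `[k-1]` with `k` elements. -/
def AugSimplex : Type := ℕ

instance : Category.{0} AugSimplex where
  Hom (k l : ℕ) := { φ : Fin k → Fin l // StrictMono φ }
  id (k : ℕ) := ⟨fun i => i, strictMono_id⟩
  comp {k l m : ℕ} φ ψ := ⟨ψ.val ∘ φ.val, ψ.property.comp φ.property⟩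
  id_comp φ := rfl
  comp_id φ := rfl
  assoc φ ψ χ := rfl

/-- The output function of the cube morphism associated to an injective
monotone map. -/
noncomputable def stcOut {k l : ℕ} (φ : { f : Fin k → Fin l // StrictMono f })
    (j : Fin l) : (Fin k × Bool) ⊕ Bool :=
  if h : ∃ i, φ.val i = j then Sum.inl (h.choose, false) else Sum.inr false

theorem stcOut_eq {k l : ℕ} (φ : { f : Fin k → Fin l // StrictMono f }) (i : Fin k) :
    stcOut φ (φ.val i) = Sum.inl (i, false) := by
  have h : ∃ i', φ.val i' = φ.val i := ⟨i, rfl⟩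
  rw [stcOut, dif_pos h]
  have : h.choose = i := φ.property.injective h.choose_spec
  rw [this]

theorem stcOut_neg {k l : ℕ} (φ : { f : Fin k → Fin l // StrictMono f }) {j : Fin l}
    (h : ¬ ∃ i, φ.val i = j) : stcOut φ j = Sum.inr false := by
  rw [stcOut, dif_neg h]

/-- The cube morphism associated to an injective monotone map: insert the
`0`-face in the coordinates missing from the image. -/
noncomputable def stcHom {k l : ℕ} (φ : { f : Fin k → Fin l // StrictMono f }) :
    CubeHom k l where
  out := stcOut φ
  uniq := by
    intro i
    refine ⟨φ.val i, ⟨false, stcOut_eq φ i⟩, ?_⟩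
    rintro j ⟨b, hb⟩
    by_cases h : ∃ i', φ.val i' = j
    · rw [stcOut, dif_pos h] at hb
      have h1 : h.choose = i := by simpa using (Prod.ext_iff.mp (Sum.inl.inj hb)).1
      rw [← h.choose_spec, h1]
    · rw [stcOut_neg φ h] at hb
      simp at hb

/-- The monoidal functor `r : Δ_{a,♯} ⥤ □^s_♯`, sending `[n]` to `I^{n+1}` and
the unique map `[-1] → [0]` to `δ₀`: an injective monotone map is sent to the
cube morphism inserting the `0`-face in the missing coordinates. -/
noncomputable def toCube : AugSimplex ⥤ SemiCube where
  obj k := k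
  map {k l} φ := stcHom φ
  map_id k := by
    apply CubeHom.ext
    funext j
    exact stcOut_eq (𝟙 (k : AugSimplex) : _) j
  map_comp {a b c} φ ψ := by
    apply CubeHom.ext
    funext j
    show stcOut (φ ≫ ψ) j = (stcHom φ).compOut (stcHom ψ) j
    by_cases hc : ∃ i, (φ ≫ ψ : _).val i = j
    · rw [← hc.choose_spec]
      rw [show ((φ ≫ ψ : _).val hc.choose) = ψ.val (φ.val hc.choose) from rfl]
      rw [show stcOut (φ ≫ ψ) (ψ.val (φ.val hc.choose)) = Sum.inl (hc.choose, false) from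
        stcOut_eq (φ ≫ ψ) hc.choose]
      rw [((stcHom φ).compOut_inl (stcHom ψ) (stcOut_eq ψ (φ.val hc.choose))).1
        (stcOut_eq φ hc.choose)]
      rfl
    · rw [stcOut_neg (φ ≫ ψ) hc]
      by_cases hψ : ∃ i', ψ.val i' = j
      · obtain ⟨i', hi'⟩ := hψ
        rw [← hi']
        by_cases hφ : ∃ i, φ.val i = i'
        · obtain ⟨i, hi⟩ := hφ
          exact absurd (⟨i, by
            rw [show ((φ ≫ ψ : _).val i : Fin _) = ψ.val (φ.val i) from rfl, hi, hi']⟩ :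
              ∃ i0, (φ ≫ ψ : _).val i0 = j) hc
        · rw [((stcHom φ).compOut_inl (stcHom ψ) (stcOut_eq ψ i')).2 (stcOut_neg φ hφ)]
          rfl
      · rw [(stcHom φ).compOut_inr (stcHom ψ) (stcOut_neg ψ hψ)]

end Cubes

section Misc

variable {C : Type u} [Category.{u} C] {J : Type u} [Category.{u} J]

/-- The canonical frame associated to an object `x` by a cotensor system:
the diagram `r ↦ x^{J^r}`. -/
@[simps]
def Cotensors.canonicalFrame (S : Cotensors J C) (x : C) : Jᵒᵖ ⥤ C where
  obj r := S.cot x (yoneda.obj r.unop)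
  map {r r'} u := S.cotMap x (yoneda.map u.unop)
  map_id r := by
    show S.cotMap x (yoneda.map (𝟙 r).unop) = _
    rw [unop_id, CategoryTheory.Functor.map_id, S.cotMap_id]
  map_comp {r r' r''} u v := by
    show S.cotMap x (yoneda.map (u ≫ v).unop) = _
    rw [unop_comp, Functor.map_comp, S.cotMap_comp]

/-- The map of canonical frames induced by a morphism. -/
@[simps]
def Cotensors.canonicalFrameMap (S : Cotensors J C) {x y : C} (f : x ⟶ y) :
    S.canonicalFrame x ⟶ S.canonicalFrame y where
  app r := S.cotObj f (yoneda.obj r.unop)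
  naturality {r r'} u := (S.cot_comm f (yoneda.map u.unop)).symm

variable {D R : Type u} [Category.{u} D] [Category.{u} R]

/-- Pointwise weak equivalences of `R`-frames. -/
def frameWeq (T : Tribe C) (p : D ⥤ R) : MorphismProperty (RelFrameCat T p) :=
  fun F G φ => ∀ r : Rᵒᵖ, T.weq (NatTrans.app (F := F.obj) (G := G.obj) φ.hom r)

/-- The evaluation functor of `R`-frames at an object `O` of `R`. -/
def evalAt (T : Tribe C) (p : D ⥤ R) (O : R) : RelFrameCat T p ⥤ C :=
  ObjectProperty.ι _ ⋙ (CategoryTheory.evaluation Rᵒᵖ C).obj (op O)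

/-- Strong monoidal structure data for a functor between monoidal categories. -/
structure StrongMonoidalData (A B : Type u) [Category.{u} A] [Category.{u} B]
    [MonoidalCategory A] [MonoidalCategory B] (c : A ⥤ B) : Type u where
  ε : c.obj (𝟙_ A) ≅ 𝟙_ B
  μ : ∀ x y : A, MonoidalCategory.tensorObj (c.obj x) (c.obj y) ≅ c.obj (MonoidalCategory.tensorObj x y)
  μ_natural : ∀ {x x' y y' : A} (f : x ⟶ x') (g : y ⟶ y'),
    MonoidalCategory.tensorHom (c.map f) (c.map g) ≫ (μ x' y').hom =
      (μ x y).hom ≫ c.map (MonoidalCategory.tensorHom f g)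

/-- The Reedy fibrations as a morphism property of the diagram category. -/
def reedyFibProp (T : Tribe C) (J : Type u) [Category.{u} J] :
    MorphismProperty (Jᵒᵖ ⥤ C) :=
  fun _ _ q => ReedyFib T q

end Misc

section LanAux

variable {D R : Type u} [Category.{u} D] [Category.{u} R]

/-- Indexing data for the coend computing the left Kan extension of a
presheaf along `p`. -/
structure LanIdx (p : D ⥤ R) (M : Dᵒᵖ ⥤ Type u) (x : R) : Type u where
  d : D
  m : M.obj (op d)
  f : x ⟶ p.obj d

/-- The wedge relation for the Kan extension coend. -/
def lanRel (p : D ⥤ R) (M : Dᵒᵖ ⥤ Type u) (x : R) :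
    LanIdx p M x → LanIdx p M x → Prop := fun a b =>
  ∃ u : a.d ⟶ b.d, a.m = M.map u.op b.m ∧ b.f = a.f ≫ p.map u

/-- The explicit (coend) formula for the left Kan extension of a presheaf of
sets along `p`. -/
def LanPsh (p : D ⥤ R) (M : Dᵒᵖ ⥤ Type u) : Rᵒᵖ ⥤ Type u where
  obj x := Quot (lanRel p M x.unop)
  map {x y} g :=
    TypeCat.ofHom (Quot.map (fun (a : LanIdx p M x.unop) => ({ a with f := g.unop ≫ a.f } : LanIdx p M y.unop))
      (by
        rintro a b ⟨u, hm, hf⟩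
        exact ⟨u, hm, by dsimp; rw [hf, Category.assoc]⟩))
  map_id x := by
    ext a'; revert a'; apply Quot.ind; intro a
    show Quot.mk _ _ = Quot.mk _ _
    exact congrArg (fun t => Quot.mk (lanRel p M x.unop) { a with f := t })
      (Category.id_comp a.f)
  map_comp {x y z} g h := by
    ext a'; revert a'; apply Quot.ind; intro a
    show Quot.mk _ _ = Quot.mk _ _
    exact congrArg (fun t => Quot.mk (lanRel p M z.unop) { a with f := t })
      (by simp)

/-- Functoriality of `LanPsh` in the presheaf. -/
def lanPshMap (p : D ⥤ R) {M M' : Dᵒᵖ ⥤ Type u} (φ : M ⟶ M') :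
    LanPsh p M ⟶ LanPsh p M' where
  app x := TypeCat.ofHom (Quot.map (fun (a : LanIdx p M x.unop) => ({ a with m := φ.app (op a.d) a.m } : LanIdx p M' x.unop))
    (by
      rintro a b ⟨u, hm, hf⟩
      refine ⟨u, ?_, hf⟩
      dsimp
      rw [hm]
      exact ConcreteCategory.congr_hom (φ.naturality u.op) b.m))
  naturality {x y} g := by
    ext a'; revert a'; apply Quot.ind; intro a; rfl

/-- The unit `M ⟶ p^* (LanPsh p M)`. -/
def lanUnitPsh (p : D ⥤ R) (M : Dᵒᵖ ⥤ Type u) : M ⟶ p.op ⋙ LanPsh p M where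
  app d := TypeCat.ofHom fun k => Quot.mk _ (⟨d.unop, k, 𝟙 (p.obj d.unop)⟩ : LanIdx p M (p.obj d.unop))
  naturality {d d'} u := by
    ext k
    show Quot.mk _ _ = Quot.mk _ _
    apply Quot.sound
    exact ⟨u.unop, rfl, by simp⟩

/-- Descent from the explicit Kan extension. -/
def lanDesc (p : D ⥤ R) {M : Dᵒᵖ ⥤ Type u} {G : Rᵒᵖ ⥤ Type u}
    (α : M ⟶ p.op ⋙ G) : LanPsh p M ⟶ G where
  app x := TypeCat.ofHom (Quot.lift (fun (a : LanIdx p M x.unop) => G.map a.f.op (α.app (op a.d) a.m))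
    (by
      rintro a b ⟨u, hm, hf⟩
      dsimp
      rw [hm]
      have h1 : α.app (op a.d) (M.map u.op b.m) =
          G.map (p.map u).op (α.app (op b.d) b.m) :=
        ConcreteCategory.congr_hom (α.naturality u.op) b.m
      rw [h1, ← FunctorToTypes.map_comp_apply, ← op_comp, ← hf]))
  naturality {x y} g := by
    ext a'; revert a'; apply Quot.ind; intro a
    show G.map (g.unop ≫ a.f).op _ = G.map g (G.map a.f.op _)
    rw [← FunctorToTypes.map_comp_apply]
    rfl

variable (p : D ⥤ R) [∀ F : Dᵒᵖ ⥤ Type u, p.op.HasLeftKanExtension F]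

/-- The canonical comparison between the abstract left Kan extension and the
explicit coend formula. -/
noncomputable def lanIso (M : Dᵒᵖ ⥤ Type u) : p.op.lan.obj M ≅ LanPsh p M where
  hom := Functor.descOfIsLeftKanExtension _ (p.op.lanUnit.app M) _ (lanUnitPsh p M)
  inv := lanDesc p (p.op.lanUnit.app M)
  hom_inv_id := by
    apply Functor.hom_ext_of_isLeftKanExtension _ (p.op.lanUnit.app M)
    rw [Functor.whiskerLeft_comp, ← Category.assoc,
      Functor.descOfIsLeftKanExtension_fac _ (p.op.lanUnit.app M)]
    apply NatTrans.ext; funext d; ext k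
    show (p.op.lan.obj M).map (𝟙 (p.obj d.unop)).op
        ((p.op.lanUnit.app M).app d k) = ((p.op.lanUnit.app M).app d ≫
          (Functor.whiskerLeft p.op (𝟙 (p.op.lan.obj M))).app d) k
    simp
  inv_hom_id := by
    apply NatTrans.ext; funext x
    ext a'; revert a'; apply Quot.ind; intro a
    show (Functor.descOfIsLeftKanExtension _ (p.op.lanUnit.app M) _
        (lanUnitPsh p M)).app x
        ((p.op.lan.obj M).map a.f.op ((p.op.lanUnit.app M).app (op a.d) a.m)) = Quot.mk _ a
    rw [FunctorToTypes.naturality]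
    have h2 : (Functor.descOfIsLeftKanExtension _ (p.op.lanUnit.app M) _
        (lanUnitPsh p M)).app (op (p.obj a.d)) ((p.op.lanUnit.app M).app (op a.d) a.m)
        = (lanUnitPsh p M).app (op a.d) a.m :=
      ConcreteCategory.congr_hom (Functor.descOfIsLeftKanExtension_fac_app _ (p.op.lanUnit.app M) _
        (lanUnitPsh p M) (op a.d)) a.m
    rw [h2]
    show Quot.mk _ ⟨a.d, a.m, a.f ≫ 𝟙 _⟩ = Quot.mk _ a
    rw [Category.comp_id]

lemma lanIso_hom_natural {M M' : Dᵒᵖ ⥤ Type u} (φ : M ⟶ M') :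
    p.op.lan.map φ ≫ (lanIso p M').hom = (lanIso p M).hom ≫ lanPshMap p φ := by
  apply Functor.hom_ext_of_isLeftKanExtension _ (p.op.lanUnit.app M)
  rw [Functor.whiskerLeft_comp, Functor.whiskerLeft_comp,
    ← Category.assoc, ← Category.assoc]
  have hu : p.op.lanUnit.app M ≫ Functor.whiskerLeft p.op (p.op.lan.map φ) =
      φ ≫ p.op.lanUnit.app M' := (p.op.lanUnit.naturality φ).symm
  rw [hu]
  show (φ ≫ p.op.lanUnit.app M') ≫ _ = _
  rw [Category.assoc]
  rw [show p.op.lanUnit.app M' ≫ Functor.whiskerLeft p.op (lanIso p M').hom =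
    lanUnitPsh p M' from Functor.descOfIsLeftKanExtension_fac _ (p.op.lanUnit.app M') _ _,
    show p.op.lanUnit.app M ≫ Functor.whiskerLeft p.op (lanIso p M).hom =
    lanUnitPsh p M from Functor.descOfIsLeftKanExtension_fac _ (p.op.lanUnit.app M) _ _]
  apply NatTrans.ext; funext d; ext k
  rfl

lemma lanIso_inv_natural {M M' : Dᵒᵖ ⥤ Type u} (φ : M ⟶ M') :
    lanPshMap p φ ≫ (lanIso p M').inv = (lanIso p M).inv ≫ p.op.lan.map φ := by
  rw [Iso.comp_inv_eq, Category.assoc, lanIso_hom_natural p φ, ← Category.assoc,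
    Iso.inv_hom_id, Category.id_comp]

end LanAux


section LanDay

variable {D R : Type u} [Category.{u} D] [Category.{u} R]

lemma dayMap_comp {K K' K'' L L' L'' : Dᵒᵖ ⥤ Type u} [MonoidalCategory D]
    (φ : K ⟶ K') (φ' : K' ⟶ K'') (ψ : L ⟶ L') (ψ' : L' ⟶ L'') :
    dayMap (φ ≫ φ') (ψ ≫ ψ') = dayMap φ ψ ≫ dayMap φ' ψ' := by
  apply NatTrans.ext; funext x; ext a'; revert a'; apply Quot.ind; intro a; rfl

lemma dayMap_id {K L : Dᵒᵖ ⥤ Type u} [MonoidalCategory D] :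
    dayMap (𝟙 K) (𝟙 L) = 𝟙 (DayProd K L) := by
  apply NatTrans.ext; funext x; ext a'; revert a'; apply Quot.ind; intro a; rfl

/-- The Day convolution of isomorphisms. -/
def dayIso {K K' L L' : Dᵒᵖ ⥤ Type u} [MonoidalCategory D]
    (e : K ≅ K') (e' : L ≅ L') : DayProd K L ≅ DayProd K' L' where
  hom := dayMap e.hom e'.hom
  inv := dayMap e.inv e'.inv
  hom_inv_id := by rw [← dayMap_comp, e.hom_inv_id, e'.hom_inv_id, dayMap_id]
  inv_hom_id := by rw [← dayMap_comp, e.inv_hom_id, e'.inv_hom_id, dayMap_id]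

variable [MonoidalCategory D] [MonoidalCategory R]
variable (p : D ⥤ R) (hp : StrongMonoidalData D R p)

lemma mu_inv_natural {i i' j j' : D} (u : i ⟶ i') (v : j ⟶ j') :
    (hp.μ i j).inv ≫ MonoidalCategory.tensorHom (p.map u) (p.map v) =
      p.map (MonoidalCategory.tensorHom u v) ≫ (hp.μ i' j').inv := by
  rw [Iso.inv_comp_eq, ← Category.assoc, ← hp.μ_natural u v, Category.assoc,
    Iso.hom_inv_id, Category.comp_id]

/-- The underlying function of the comparison `p_!(K ⊗ L) ⟶ p_!K ⊗ p_!L`. -/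
def phiFun (K L : Dᵒᵖ ⥤ Type u) {x : R} {d : D} (g : x ⟶ p.obj d)
    (b : DayIdx K L d) : DayIdx (LanPsh p K) (LanPsh p L) x :=
  ⟨p.obj b.i, p.obj b.j, Quot.mk _ ⟨b.i, b.k, 𝟙 _⟩, Quot.mk _ ⟨b.j, b.l, 𝟙 _⟩,
    g ≫ p.map b.f ≫ (hp.μ b.i b.j).inv⟩

lemma phiFun_rel (K L : Dᵒᵖ ⥤ Type u) {x : R} {d : D} (g : x ⟶ p.obj d)
    {b b' : DayIdx K L d} (h : dayRel K L d b b') :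
    Quot.mk (dayRel (LanPsh p K) (LanPsh p L) x) (phiFun p hp K L g b) =
    Quot.mk (dayRel (LanPsh p K) (LanPsh p L) x) (phiFun p hp K L g b') := by
  obtain ⟨u, v, hk, hl, hf⟩ := h
  apply Quot.sound
  refine ⟨p.map u, p.map v, ?_, ?_, ?_⟩
  · show Quot.mk _ _ = Quot.mk _ (⟨b'.i, b'.k, p.map u ≫ 𝟙 _⟩ : LanIdx p K _)
    exact Quot.sound ⟨u, hk, by simp⟩
  · show Quot.mk _ _ = Quot.mk _ (⟨b'.j, b'.l, p.map v ≫ 𝟙 _⟩ : LanIdx p L _)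
    exact Quot.sound ⟨v, hl, by simp⟩
  · show g ≫ p.map b'.f ≫ (hp.μ b'.i b'.j).inv = _
    rw [hf, Functor.map_comp, Category.assoc, ← mu_inv_natural p hp u v]
    show _ = (g ≫ p.map b.f ≫ (hp.μ b.i b.j).inv) ≫ _
    dsimp only [phiFun]
    simp only [Category.assoc]

/-- The comparison on coend classes. -/
def phiQ (K L : Dᵒᵖ ⥤ Type u) {x : R} {d : D} (g : x ⟶ p.obj d) :
    Quot (dayRel K L d) → Quot (dayRel (LanPsh p K) (LanPsh p L) x) :=
  Quot.lift (fun b => Quot.mk _ (phiFun p hp K L g b))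
    (fun _ _ h => phiFun_rel p hp K L g h)

/-- The canonical comparison map `p_!(K ⊗ L) ⟶ p_!K ⊗ p_!L`. -/
def phi (K L : Dᵒᵖ ⥤ Type u) :
    LanPsh p (DayProd K L) ⟶ DayProd (LanPsh p K) (LanPsh p L) where
  app x := TypeCat.ofHom (Quot.lift (fun (a : LanIdx p (DayProd K L) x.unop) => phiQ p hp K L a.f a.m)
    (by
      rintro ⟨d, m, f⟩ ⟨d', m', f'⟩ ⟨u, hm, hf⟩
      dsimp at u hm hf ⊢
      rw [hm]; subst hf
      obtain ⟨b', rfl⟩ := Quot.exists_rep m'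
      show Quot.mk _ (phiFun p hp K L f { b' with f := u ≫ b'.f }) =
        Quot.mk _ (phiFun p hp K L (f ≫ p.map u) b')
      have hff : f ≫ p.map (u ≫ b'.f) ≫ (hp.μ b'.i b'.j).inv =
          (f ≫ p.map u) ≫ p.map b'.f ≫ (hp.μ b'.i b'.j).inv := by
        rw [Functor.map_comp]; simp only [Category.assoc]
      exact congrArg (fun t => Quot.mk _
        (⟨p.obj b'.i, p.obj b'.j, Quot.mk _ ⟨b'.i, b'.k, 𝟙 _⟩,
          Quot.mk _ ⟨b'.j, b'.l, 𝟙 _⟩, t⟩ : DayIdx (LanPsh p K) (LanPsh p L) x.unop)) hff))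
  naturality {x y} g := by
    ext a'; revert a'; apply Quot.ind
    rintro ⟨d, m, f⟩
    obtain ⟨b, rfl⟩ := Quot.exists_rep m
    show Quot.mk _ (phiFun p hp K L (g.unop ≫ f) b) =
      (DayProd (LanPsh p K) (LanPsh p L)).map g (Quot.mk _ (phiFun p hp K L f b))
    exact congrArg (fun t => Quot.mk _
      (⟨p.obj b.i, p.obj b.j, Quot.mk _ ⟨b.i, b.k, 𝟙 _⟩,
        Quot.mk _ ⟨b.j, b.l, 𝟙 _⟩, t⟩ : DayIdx (LanPsh p K) (LanPsh p L) y.unop))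
      (by simp only [Category.assoc]; rfl)

/-- The underlying function of the inverse comparison. -/
def psiFun (K L : Dᵒᵖ ⥤ Type u) {x ri rj : R} (f : x ⟶ MonoidalCategory.tensorObj ri rj)
    (ka : LanIdx p K ri) (la : LanIdx p L rj) : LanIdx p (DayProd K L) x :=
  ⟨MonoidalCategory.tensorObj ka.d la.d, Quot.mk _ ⟨ka.d, la.d, ka.m, la.m, 𝟙 _⟩,
    f ≫ MonoidalCategory.tensorHom ka.f la.f ≫ (hp.μ ka.d la.d).hom⟩

lemma psiFun_relL (K L : Dᵒᵖ ⥤ Type u) {x ri rj : R}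
    (f : x ⟶ MonoidalCategory.tensorObj ri rj) (ka : LanIdx p K ri)
    {la la' : LanIdx p L rj} (h : lanRel p L rj la la') :
    Quot.mk (lanRel p (DayProd K L) x) (psiFun p hp K L f ka la) =
    Quot.mk (lanRel p (DayProd K L) x) (psiFun p hp K L f ka la') := by
  obtain ⟨v, hm, hf⟩ := h
  apply Quot.sound
  refine ⟨MonoidalCategory.tensorHom (𝟙 ka.d) v, ?_, ?_⟩
  · show Quot.mk _ _ = Quot.mk _
      (⟨ka.d, la'.d, ka.m, la'.m, MonoidalCategory.tensorHom (𝟙 ka.d) v ≫ 𝟙 _⟩ :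
        DayIdx K L _)
    exact Quot.sound ⟨𝟙 ka.d, v, by simp, hm, by simp⟩
  · have h1 : MonoidalCategory.tensorHom (𝟙 (p.obj ka.d)) (p.map v) ≫
        (hp.μ ka.d la'.d).hom =
        (hp.μ ka.d la.d).hom ≫ p.map (MonoidalCategory.tensorHom (𝟙 ka.d) v) := by
      simpa using hp.μ_natural (𝟙 ka.d) v
    show f ≫ MonoidalCategory.tensorHom ka.f la'.f ≫ (hp.μ ka.d la'.d).hom = _
    rw [hf, show MonoidalCategory.tensorHom ka.f (la.f ≫ p.map v) =
      MonoidalCategory.tensorHom ka.f la.f ≫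
        MonoidalCategory.tensorHom (𝟙 (p.obj ka.d)) (p.map v) from by
          rw [MonoidalCategory.tensorHom_comp_tensorHom, Category.comp_id]]
    show _ = (f ≫ MonoidalCategory.tensorHom ka.f la.f ≫ (hp.μ ka.d la.d).hom) ≫ _
    dsimp only [psiFun]
    simp only [Category.assoc, h1]

lemma psiFun_relK (K L : Dᵒᵖ ⥤ Type u) {x ri rj : R}
    (f : x ⟶ MonoidalCategory.tensorObj ri rj)
    {ka ka' : LanIdx p K ri} (h : lanRel p K ri ka ka') (la : LanIdx p L rj) :
    Quot.mk (lanRel p (DayProd K L) x) (psiFun p hp K L f ka la) =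
    Quot.mk (lanRel p (DayProd K L) x) (psiFun p hp K L f ka' la) := by
  obtain ⟨u, hm, hf⟩ := h
  apply Quot.sound
  refine ⟨MonoidalCategory.tensorHom u (𝟙 la.d), ?_, ?_⟩
  · show Quot.mk _ _ = Quot.mk _
      (⟨ka'.d, la.d, ka'.m, la.m, MonoidalCategory.tensorHom u (𝟙 la.d) ≫ 𝟙 _⟩ :
        DayIdx K L _)
    exact Quot.sound ⟨u, 𝟙 la.d, hm, by simp, by simp⟩
  · have h1 : MonoidalCategory.tensorHom (p.map u) (𝟙 (p.obj la.d)) ≫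
        (hp.μ ka'.d la.d).hom =
        (hp.μ ka.d la.d).hom ≫ p.map (MonoidalCategory.tensorHom u (𝟙 la.d)) := by
      simpa using hp.μ_natural u (𝟙 la.d)
    show f ≫ MonoidalCategory.tensorHom ka'.f la.f ≫ (hp.μ ka'.d la.d).hom = _
    rw [hf, show MonoidalCategory.tensorHom (ka.f ≫ p.map u) la.f =
      MonoidalCategory.tensorHom ka.f la.f ≫
        MonoidalCategory.tensorHom (p.map u) (𝟙 (p.obj la.d)) from by
          rw [MonoidalCategory.tensorHom_comp_tensorHom, Category.comp_id]]
    show _ = (f ≫ MonoidalCategory.tensorHom ka.f la.f ≫ (hp.μ ka.d la.d).hom) ≫ _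
    dsimp only [psiFun]
    simp only [Category.assoc, h1]

/-- The inverse comparison map `p_!K ⊗ p_!L ⟶ p_!(K ⊗ L)`. -/
def psi (K L : Dᵒᵖ ⥤ Type u) :
    DayProd (LanPsh p K) (LanPsh p L) ⟶ LanPsh p (DayProd K L) where
  app x := TypeCat.ofHom (Quot.lift
    (fun (a : DayIdx (LanPsh p K) (LanPsh p L) x.unop) => Quot.lift₂ (fun ka la => Quot.mk _ (psiFun p hp K L a.f ka la))
      (fun ka _ _ h => psiFun_relL p hp K L a.f ka h)
      (fun _ _ la h => psiFun_relK p hp K L a.f h la) a.k a.l)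
    (by
      rintro ⟨ri, rj, k, l, f⟩ ⟨ri', rj', k', l', f'⟩ ⟨u, v, hk, hl, hf⟩
      dsimp at u v hk hl hf ⊢
      rw [hk, hl]; subst hf
      obtain ⟨ka', rfl⟩ := Quot.exists_rep k'
      obtain ⟨la', rfl⟩ := Quot.exists_rep l'
      show Quot.mk _ (psiFun p hp K L f { ka' with f := u ≫ ka'.f }
        { la' with f := v ≫ la'.f }) =
        Quot.mk _ (psiFun p hp K L (f ≫ MonoidalCategory.tensorHom u v) ka' la')
      have hff : f ≫ MonoidalCategory.tensorHom (u ≫ ka'.f) (v ≫ la'.f) ≫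
          (hp.μ ka'.d la'.d).hom =
          (f ≫ MonoidalCategory.tensorHom u v) ≫
            MonoidalCategory.tensorHom ka'.f la'.f ≫ (hp.μ ka'.d la'.d).hom := by
        rw [← MonoidalCategory.tensorHom_comp_tensorHom]; simp only [Category.assoc]
      exact congrArg (fun t => Quot.mk _
        (⟨MonoidalCategory.tensorObj ka'.d la'.d,
          Quot.mk _ ⟨ka'.d, la'.d, ka'.m, la'.m, 𝟙 _⟩, t⟩ :
            LanIdx p (DayProd K L) x.unop)) hff))
  naturality {x y} g := by
    ext a'; revert a'; apply Quot.ind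
    rintro ⟨ri, rj, k, l, f⟩
    obtain ⟨ka, rfl⟩ := Quot.exists_rep k
    obtain ⟨la, rfl⟩ := Quot.exists_rep l
    show Quot.mk _ (psiFun p hp K L (g.unop ≫ f) ka la) =
      (LanPsh p (DayProd K L)).map g (Quot.mk _ (psiFun p hp K L f ka la))
    exact congrArg (fun t => Quot.mk _
      (⟨MonoidalCategory.tensorObj ka.d la.d,
        Quot.mk _ ⟨ka.d, la.d, ka.m, la.m, 𝟙 _⟩, t⟩ :
          LanIdx p (DayProd K L) y.unop)) (by simp only [Category.assoc]; rfl)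

/-- The comparison `p_!(K ⊗ L) ≅ p_!K ⊗ p_!L` in coend form. -/
def phiIso (K L : Dᵒᵖ ⥤ Type u) :
    LanPsh p (DayProd K L) ≅ DayProd (LanPsh p K) (LanPsh p L) where
  hom := phi p hp K L
  inv := psi p hp K L
  hom_inv_id := by
    apply NatTrans.ext; funext x; ext a'; revert a'; apply Quot.ind
    rintro ⟨d, m, f⟩
    obtain ⟨b, rfl⟩ := Quot.exists_rep m
    show Quot.mk _ (psiFun p hp K L (f ≫ p.map b.f ≫ (hp.μ b.i b.j).inv)
      ⟨b.i, b.k, 𝟙 _⟩ ⟨b.j, b.l, 𝟙 _⟩) = Quot.mk _ _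
    have hff : (f ≫ p.map b.f ≫ (hp.μ b.i b.j).inv) ≫
        MonoidalCategory.tensorHom (𝟙 (p.obj b.i)) (𝟙 (p.obj b.j)) ≫
          (hp.μ b.i b.j).hom = f ≫ p.map b.f := by
      rw [MonoidalCategory.id_tensorHom_id]
      simp
    rw [show psiFun p hp K L (f ≫ p.map b.f ≫ (hp.μ b.i b.j).inv)
        (⟨b.i, b.k, 𝟙 _⟩ : LanIdx p K _) (⟨b.j, b.l, 𝟙 _⟩ : LanIdx p L _) =
        ⟨MonoidalCategory.tensorObj b.i b.j, Quot.mk _ ⟨b.i, b.j, b.k, b.l, 𝟙 _⟩,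
          f ≫ p.map b.f⟩ from
      congrArg (fun t => (⟨MonoidalCategory.tensorObj b.i b.j,
        Quot.mk _ ⟨b.i, b.j, b.k, b.l, 𝟙 _⟩, t⟩ : LanIdx p (DayProd K L) x.unop)) hff]
    refine (Quot.sound ⟨b.f, ?_, rfl⟩).symm
    show Quot.mk _ b = Quot.mk _ (⟨b.i, b.j, b.k, b.l, b.f ≫ 𝟙 _⟩ : DayIdx K L d)
    exact congrArg (fun t => Quot.mk _ (⟨b.i, b.j, b.k, b.l, t⟩ : DayIdx K L d))
      (Category.comp_id b.f).symm
  inv_hom_id := by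
    apply NatTrans.ext; funext x; ext a'; revert a'; apply Quot.ind
    rintro ⟨ri, rj, k, l, f⟩
    obtain ⟨ka, rfl⟩ := Quot.exists_rep k
    obtain ⟨la, rfl⟩ := Quot.exists_rep l
    show Quot.mk _ (phiFun p hp K L
      (f ≫ MonoidalCategory.tensorHom ka.f la.f ≫ (hp.μ ka.d la.d).hom)
      ⟨ka.d, la.d, ka.m, la.m, 𝟙 _⟩) = Quot.mk _ _
    have hff : (f ≫ MonoidalCategory.tensorHom ka.f la.f ≫ (hp.μ ka.d la.d).hom) ≫
        p.map (𝟙 (MonoidalCategory.tensorObj ka.d la.d)) ≫ (hp.μ ka.d la.d).inv =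
        f ≫ MonoidalCategory.tensorHom ka.f la.f := by
      rw [CategoryTheory.Functor.map_id]
      simp
    rw [show phiFun p hp K L
        (f ≫ MonoidalCategory.tensorHom ka.f la.f ≫ (hp.μ ka.d la.d).hom)
        (⟨ka.d, la.d, ka.m, la.m, 𝟙 _⟩ : DayIdx K L _) =
        ⟨p.obj ka.d, p.obj la.d, Quot.mk _ ⟨ka.d, ka.m, 𝟙 _⟩,
          Quot.mk _ ⟨la.d, la.m, 𝟙 _⟩, f ≫ MonoidalCategory.tensorHom ka.f la.f⟩ from
      congrArg (fun t => (⟨p.obj ka.d, p.obj la.d, Quot.mk _ ⟨ka.d, ka.m, 𝟙 _⟩,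
        Quot.mk _ ⟨la.d, la.m, 𝟙 _⟩, t⟩ :
          DayIdx (LanPsh p K) (LanPsh p L) x.unop)) hff]
    refine (Quot.sound ⟨ka.f, la.f, ?_, ?_, rfl⟩).symm
    · show Quot.mk _ ka = Quot.mk _ (⟨ka.d, ka.m, ka.f ≫ 𝟙 _⟩ : LanIdx p K _)
      exact congrArg (fun t => Quot.mk _ (⟨ka.d, ka.m, t⟩ : LanIdx p K ri))
        (Category.comp_id ka.f).symm
    · show Quot.mk _ la = Quot.mk _ (⟨la.d, la.m, la.f ≫ 𝟙 _⟩ : LanIdx p L _)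
      exact congrArg (fun t => Quot.mk _ (⟨la.d, la.m, t⟩ : LanIdx p L rj))
        (Category.comp_id la.f).symm

lemma phi_natural {K K' L L' : Dᵒᵖ ⥤ Type u} (φ : K ⟶ K') (ψ : L ⟶ L') :
    lanPshMap p (dayMap φ ψ) ≫ phi p hp K' L' =
      phi p hp K L ≫ dayMap (lanPshMap p φ) (lanPshMap p ψ) := by
  apply NatTrans.ext; funext x; ext a'; revert a'; apply Quot.ind
  rintro ⟨d, m, f⟩
  obtain ⟨b, rfl⟩ := Quot.exists_rep m
  rfl

/-- The explicit Kan extension of a representable presheaf. -/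
def yIso (d₀ : D) : LanPsh p (yoneda.obj d₀) ≅ yoneda.obj (p.obj d₀) where
  hom :=
    { app := fun x => TypeCat.ofHom (Quot.lift (fun (a : LanIdx p (yoneda.obj d₀) x.unop) => a.f ≫ p.map a.m)
        (by
          rintro a b ⟨u, hm, hf⟩
          show a.f ≫ p.map a.m = b.f ≫ p.map b.m
          have hm' : a.m = u ≫ b.m := hm
          rw [hm', Functor.map_comp, hf]
          simp only [Category.assoc]))
      naturality := by
        intro x y g
        ext a'; revert a'; apply Quot.ind; intro a
        show (g.unop ≫ a.f) ≫ p.map a.m = g.unop ≫ (a.f ≫ p.map a.m)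
        simp only [Category.assoc] }
  inv :=
    { app := fun x => TypeCat.ofHom fun f => Quot.mk _ (⟨d₀, 𝟙 d₀, f⟩ : LanIdx p (yoneda.obj d₀) x.unop)
      naturality := by intro x y g; ext f; rfl }
  hom_inv_id := by
    apply NatTrans.ext; funext x; ext a'; revert a'; apply Quot.ind; intro a
    show Quot.mk _ (⟨d₀, 𝟙 d₀, a.f ≫ p.map a.m⟩ : LanIdx p (yoneda.obj d₀) x.unop) =
      Quot.mk _ a
    exact (Quot.sound ⟨a.m, (Category.comp_id a.m).symm, rfl⟩).symm
  inv_hom_id := by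
    apply NatTrans.ext; funext x; ext f
    show f ≫ p.map (𝟙 d₀) = f
    simp

end LanDay

/-- Suppose `R₀` and `R` are monoidal, `c : R₀ ⥤ R` is
strong monoidal, and `D_R` carries the induced monoidal product making the
projection `p : D_R ⥤ R` monoidal. Then the left Kan extension
`p_! : Set^{D_R^{op}} ⥤ Set^{R^{op}}` is canonically strong monoidal for the
Day convolution products: there are isomorphisms
`p_!(K ⊗ L) ≅ p_!K ⊗ p_!L`, natural in `K` and `L`, and
`p_!(unit) ≅ unit`. -/
theorem statement_6
    {R₀ R : Type u} [Category.{u} R₀] [Category.{u} R]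
    [MonoidalCategory R₀] [MonoidalCategory R]
    (deg₀ : R₀ → ℕ) (hdir₀ : IsDirect deg₀)
    (degR : R → ℕ) (hgen : IsGenDirect degR)
    (c : R₀ ⥤ R) (hc : StrongMonoidalData R₀ R c)
    (hlift : ∀ {a b : R} (f : a ⟶ b),
      ∃ (x y : R₀) (k : x ⟶ y) (w : a ≅ c.obj x) (w' : b ≅ c.obj y),
        w.hom ≫ c.map k = f ≫ w'.hom)
    [MonoidalCategory (DCat c)] (hp : StrongMonoidalData (DCat c) R (projD c)) :
    ∃ (s : ∀ K L : (DCat c)ᵒᵖ ⥤ Type u,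
        (projD c).op.lan.obj (DayProd K L) ≅
          DayProd ((projD c).op.lan.obj K) ((projD c).op.lan.obj L))
      (_ : (projD c).op.lan.obj (yoneda.obj (𝟙_ (DCat c))) ≅ yoneda.obj (𝟙_ R)),
      ∀ {K K' L L' : (DCat c)ᵒᵖ ⥤ Type u} (φ : K ⟶ K') (ψ : L ⟶ L'),
        (projD c).op.lan.map (dayMap φ ψ) ≫ (s K' L').hom =
          (s K L).hom ≫ dayMap ((projD c).op.lan.map φ) ((projD c).op.lan.map ψ) := by
  set p := projD c
  refine ⟨fun K L => lanIso p (DayProd K L) ≪≫ phiIso p hp K L ≪≫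
      dayIso (lanIso p K).symm (lanIso p L).symm,
    lanIso p (yoneda.obj (𝟙_ (DCat c))) ≪≫ yIso p (𝟙_ (DCat c)) ≪≫
      yoneda.mapIso hp.ε, ?_⟩
  intro K K' L L' φ ψ
  dsimp only [Iso.trans_hom, Iso.symm_hom, dayIso, phiIso]
  rw [← Category.assoc, lanIso_hom_natural, Category.assoc, ← Category.assoc (lanPshMap p _),
    phi_natural, Category.assoc, ← dayMap_comp, lanIso_inv_natural, lanIso_inv_natural,
    dayMap_comp]
  simp only [Category.assoc]

end PaperFormal
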